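/- arXiv:1602.04747 — 4 statements merged into one kernel-verified Lean document; each statement's English description precedes it below -/
import Mathlib

section
/- Let n ≥ 1 and let m ≥ 2 be a natural number with prime factorization m = ∏_i p_i^{k_i}. Then the number of n×n matrices over ℤ/mℤ that are invertible modulo m equals ∏_i ( p_i^{(k_i − 1)·n²} · ∏_{j=0}^{n−1} (p_i^n − p_i^j) ). Equivalently, the cardinality of the general linear group GL(n, ℤ/mℤ) is ∏_{p ∣ m prime} p^{(v_p(m) − 1)·n²} · ∏_{j=0}^{n−1} (p^n − p^j), where v_p(m) is the p-adic valuation of m. -/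
open Matrix

/-- Units of a pi monoid are the pi of units. -/
def piUnitsEquiv {ι : Type*} (M : ι → Type*) [∀ i, Monoid (M i)] :
    (∀ i, M i)ˣ ≃* ∀ i, (M i)ˣ where
  toFun u i := ⟨u.val i, u.inv i, congrFun u.val_inv i, congrFun u.inv_val i⟩
  invFun f := ⟨fun i => (f i).val, fun i => (f i).inv,
    funext fun i => (f i).val_inv, funext fun i => (f i).inv_val⟩
  left_inv u := Units.ext rfl
  right_inv f := funext fun i => Units.ext rfl
  map_mul' u v := funext fun i => Units.ext rfl

/-- Matrices over a pi ring are the pi of matrix rings. -/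
def matrixPiEquiv {ι : Type*} (R : ι → Type*) [∀ i, Semiring (R i)]
    (n : Type*) [Fintype n] [DecidableEq n] :
    Matrix n n (∀ i, R i) ≃+* ∀ i, Matrix n n (R i) where
  toFun A i := A.map (fun x => x i)
  invFun f := Matrix.of fun j k i => f i j k
  left_inv A := rfl
  right_inv f := rfl
  map_add' A B := rfl
  map_mul' A B := by
    funext i j k
    simp [Matrix.mul_apply, Matrix.map_apply, Finset.sum_apply]

lemma zmod_isUnit_iff_cast {p k : ℕ} (hp : p.Prime) (hk : 1 ≤ k) (x : ZMod (p ^ k)) :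
    IsUnit x ↔ IsUnit (ZMod.castHom (dvd_pow_self p (by omega : k ≠ 0)) (ZMod p) x) := by
  have hpk : NeZero (p ^ k) := ⟨pow_ne_zero _ hp.pos.ne'⟩
  constructor
  · exact fun h => h.map _
  · intro h
    have hx : x = ((x.val : ℕ) : ZMod (p ^ k)) := by rw [ZMod.natCast_val, ZMod.cast_id]
    have hc : (ZMod.castHom (dvd_pow_self p (by omega : k ≠ 0)) (ZMod p) x) = ((x.val : ℕ) : ZMod p) := by
      rw [ZMod.castHom_apply, ← ZMod.natCast_val]
    rw [hc, ZMod.isUnit_iff_coprime] at h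
    rw [hx, ZMod.isUnit_iff_coprime]
    exact Nat.Coprime.pow_right _ h

lemma zmod_fiber_card {p k : ℕ} (hp : p.Prime) (hk : 1 ≤ k) (c : ZMod p) :
    Nat.card {x : ZMod (p ^ k) //
      ZMod.castHom (dvd_pow_self p (by omega : k ≠ 0)) (ZMod p) x = c} = p ^ (k - 1) := by
  have hpk : NeZero (p ^ k) := ⟨pow_ne_zero _ hp.pos.ne'⟩
  have hpp : NeZero p := ⟨hp.pos.ne'⟩
  set f : ZMod (p ^ k) → ZMod p :=
    fun x => ZMod.castHom (dvd_pow_self p (by omega : k ≠ 0)) (ZMod p) x with hf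
  have hc : ∀ d : ZMod p, f ((d.val : ℕ) : ZMod (p ^ k)) = d := by
    intro d
    simp only [hf]
    rw [map_natCast, ZMod.natCast_val, ZMod.cast_id]
  have key : ∀ d : ZMod p,
      Fintype.card {x : ZMod (p ^ k) // f x = d} = Fintype.card {x : ZMod (p ^ k) // f x = 0} := by
    intro d
    apply Fintype.card_congr
    refine ⟨fun x => ⟨x.1 - ((d.val : ℕ) : ZMod (p ^ k)), ?_⟩,
      fun y => ⟨y.1 + ((d.val : ℕ) : ZMod (p ^ k)), ?_⟩, ?_, ?_⟩
    · simp only [hf, map_sub]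
      rw [show (ZMod.castHom (dvd_pow_self p (by omega : k ≠ 0)) (ZMod p)) x.1 = f x.1 from rfl,
        show (ZMod.castHom (dvd_pow_self p (by omega : k ≠ 0)) (ZMod p))
          ((d.val : ℕ) : ZMod (p ^ k)) = f ((d.val : ℕ) : ZMod (p ^ k)) from rfl,
        x.2, hc d, sub_self]
    · simp only [hf, map_add]
      rw [show (ZMod.castHom (dvd_pow_self p (by omega : k ≠ 0)) (ZMod p)) y.1 = f y.1 from rfl,
        show (ZMod.castHom (dvd_pow_self p (by omega : k ≠ 0)) (ZMod p))
          ((d.val : ℕ) : ZMod (p ^ k)) = f ((d.val : ℕ) : ZMod (p ^ k)) from rfl,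
        y.2, hc d, zero_add]
    · intro x; ext; simp
    · intro y; ext; simp
  have hsum : Fintype.card (ZMod (p ^ k)) =
      Fintype.card (ZMod p) * Fintype.card {x : ZMod (p ^ k) // f x = 0} := by
    rw [← Fintype.card_congr (Equiv.sigmaFiberEquiv f), Fintype.card_sigma]
    simp only [key, Finset.sum_const, Finset.card_univ, smul_eq_mul]
  rw [ZMod.card, ZMod.card] at hsum
  have h0 : Fintype.card {x : ZMod (p ^ k) // f x = 0} = p ^ (k - 1) := by
    have : p * p ^ (k - 1) = p ^ k := by
      rw [← pow_succ']
      congr 1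
      omega
    exact Nat.eq_of_mul_eq_mul_left hp.pos (by rw [this, ← hsum])
  rw [Nat.card_eq_fintype_card]
  exact (key c).trans h0

lemma card_GL_zmod_prime_pow (n p k : ℕ) (hp : p.Prime) (hk : 1 ≤ k) :
    Nat.card (GL (Fin n) (ZMod (p ^ k))) =
      p ^ ((k - 1) * n ^ 2) * ∏ j ∈ Finset.range n, (p ^ n - p ^ j) := by
  have hF : Fact p.Prime := ⟨hp⟩
  set φ := ZMod.castHom (dvd_pow_self p (show k ≠ 0 by omega)) (ZMod p) with hφ
  set ψ := (RingHom.mapMatrix (m := Fin n) φ) with hψ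
  set F : GL (Fin n) (ZMod (p ^ k)) →* GL (Fin n) (ZMod p) :=
    Matrix.GeneralLinearGroup.map φ with hFdef
  -- a matrix is a unit iff its reduction is
  have hunit : ∀ A : Matrix (Fin n) (Fin n) (ZMod (p ^ k)), IsUnit A ↔ IsUnit (ψ A) := by
    intro A
    rw [Matrix.isUnit_iff_isUnit_det, Matrix.isUnit_iff_isUnit_det,
      show (ψ A : Matrix (Fin n) (Fin n) (ZMod p)) = A.map φ from rfl,
      show (A.map ⇑φ).det = φ A.det from (RingHom.map_det φ A).symm]
    exact zmod_isUnit_iff_cast hp hk A.det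
  -- F is surjective
  have hsurj : Function.Surjective F := by
    intro B
    have hψs : Function.Surjective ψ := by
      intro C
      refine ⟨Matrix.of fun i j => Classical.choose (ZMod.ringHom_surjective φ (C i j)), ?_⟩
      funext i j
      exact Classical.choose_spec (ZMod.ringHom_surjective φ (C i j))
    obtain ⟨A, hA⟩ := hψs B.val
    have hAu : IsUnit A := (hunit A).mpr (hA ▸ B.isUnit)
    refine ⟨hAu.unit, Units.ext ?_⟩
    show ψ (hAu.unit.val) = B.val
    rw [IsUnit.unit_spec, hA]
  -- kernel of F
  have hker : Nat.card F.ker = p ^ ((k - 1) * n ^ 2) := by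
    have hone : ∀ A : {A : Matrix (Fin n) (Fin n) (ZMod (p ^ k)) // ψ A = 1}, IsUnit A.1 :=
      fun A => (hunit A.1).mpr (by rw [A.2]; exact isUnit_one)
    have e1 : F.ker ≃ {A : Matrix (Fin n) (Fin n) (ZMod (p ^ k)) // ψ A = 1} := by
      refine ⟨fun u => ⟨u.1.val, congrArg Units.val (MonoidHom.mem_ker.mp u.2)⟩,
        fun A => ⟨(hone A).unit, ?_⟩, fun u => ?_, fun A => ?_⟩
      · rw [MonoidHom.mem_ker]
        apply Units.ext
        show ψ ((hone A).unit.val) = (1 : Matrix (Fin n) (Fin n) (ZMod p))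
        rw [IsUnit.unit_spec, A.2]
      · apply Subtype.ext
        apply Units.ext
        exact (hone _).unit_spec
      · apply Subtype.ext
        exact (hone _).unit_spec
    have e2 : {A : Matrix (Fin n) (Fin n) (ZMod (p ^ k)) // ψ A = 1} ≃
        ∀ i : Fin n, ∀ j : Fin n,
          {x : ZMod (p ^ k) // φ x = (1 : Matrix (Fin n) (Fin n) (ZMod p)) i j} := by
      refine ⟨fun A i j => ⟨A.1 i j, congrFun (congrFun A.2 i) j⟩,
        fun g => ⟨Matrix.of fun i j => (g i j).1, ?_⟩, fun A => rfl, fun g => rfl⟩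
      funext i j
      exact (g i j).2
    rw [Nat.card_congr (e1.trans e2), Nat.card_pi]
    have hrow : ∀ i : Fin n, Nat.card (∀ j : Fin n,
        {x : ZMod (p ^ k) // φ x = (1 : Matrix (Fin n) (Fin n) (ZMod p)) i j}) =
        p ^ ((k - 1) * n) := by
      intro i
      rw [Nat.card_pi]
      have : ∀ j : Fin n, Nat.card
          {x : ZMod (p ^ k) // φ x = (1 : Matrix (Fin n) (Fin n) (ZMod p)) i j} = p ^ (k - 1) :=
        fun j => zmod_fiber_card hp hk _
      simp only [this, Finset.prod_const, Finset.card_univ, Fintype.card_fin, ← pow_mul]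
    simp only [hrow, Finset.prod_const, Finset.card_univ, Fintype.card_fin, ← pow_mul]
    congr 1
    ring
  rw [Subgroup.card_eq_card_quotient_mul_card_subgroup F.ker,
    Nat.card_congr (QuotientGroup.quotientKerEquivOfSurjective F hsurj).toEquiv, hker,
    Matrix.card_GL_field]
  simp only [ZMod.card]
  rw [Fin.prod_univ_eq_prod_range (fun j => p ^ n - p ^ j) n, mul_comm]

/-- Overbey–Traves–Wojdylo Hill cipher keyspace size theorem: for `m ≥ 2` with prime
factorization `m = ∏ p^(v_p m)`, the number of invertible `n × n` matrices over `ℤ/mℤ` is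
`∏_{p ∣ m prime} p^((v_p(m) − 1)·n²) · ∏_{j=0}^{n−1} (p^n − p^j)`. -/
theorem hill_keyspace_size (n m : ℕ) (hn : 1 ≤ n) (hm : 2 ≤ m) :
    Nat.card (GL (Fin n) (ZMod m)) =
      ∏ p ∈ m.primeFactors,
        p ^ ((m.factorization p - 1) * n ^ 2) *
          ∏ j ∈ Finset.range n, (p ^ n - p ^ j) := by
  classical
  have hm0 : m ≠ 0 := by omega
  set a : m.primeFactors → ℕ := fun i => (i : ℕ) ^ m.factorization i with ha
  have hmprod : m = ∏ i : m.primeFactors, a i := by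
    rw [Finset.prod_coe_sort m.primeFactors (fun p => p ^ m.factorization p)]
    conv_lhs => rw [← Nat.factorization_prod_pow_eq_self hm0]
    rw [Finsupp.prod, Nat.support_factorization]
  have copr : Pairwise (Function.onFun Nat.Coprime a) := by
    intro i j hij
    have hi := Nat.prime_of_mem_primeFactors i.2
    have hj := Nat.prime_of_mem_primeFactors j.2
    have : (i : ℕ) ≠ (j : ℕ) := fun h => hij (Subtype.ext h)
    exact Nat.Coprime.pow _ _ ((Nat.coprime_primes hi hj).mpr this)
  have step1 : Nat.card (GL (Fin n) (ZMod m)) =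
      Nat.card (GL (Fin n) (ZMod (∏ i : m.primeFactors, a i))) :=
    congrArg (fun t => Nat.card (GL (Fin n) (ZMod t))) hmprod
  have e0 : ZMod (∏ i : m.primeFactors, a i) ≃+* ∀ i : m.primeFactors, ZMod (a i) :=
    ZMod.prodEquivPi a copr
  have e1 : GL (Fin n) (ZMod (∏ i : m.primeFactors, a i)) ≃*
      ∀ i : m.primeFactors, GL (Fin n) (ZMod (a i)) :=
    (Units.mapEquiv (e0.mapMatrix.trans (matrixPiEquiv (fun i => ZMod (a i)) (Fin n))).toMulEquiv).trans
      (piUnitsEquiv _)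
  rw [step1, Nat.card_congr e1.toEquiv, Nat.card_pi]
  rw [← Finset.prod_coe_sort m.primeFactors]
  apply Finset.prod_congr rfl
  intro i _
  exact card_GL_zmod_prime_pow n i (m.factorization i) (Nat.prime_of_mem_primeFactors i.2)
    ((Nat.prime_of_mem_primeFactors i.2).factorization_pos_of_dvd hm0
      (Nat.dvd_of_mem_primeFactors i.2))
end

section
/- Let K, P, C be finite types, let pK : K → ℝ and pP : P → ℝ be probability distributions, and let e : K → P → C be an encryption rule such that e(k) : P → C is injective for every key k ∈ K. Define the joint distribution q on K × P by q(k, p) = pK(k)·pP(p), the ciphertext distribution pC on C by pC(c) = ∑_{(k,p) : e(k)(p) = c} q(k, p), and the joint key–ciphertext distribution r on K × C by r(k, c) = ∑_{p : e(k)(p) = c} q(k, p). Then the key equivocation H(K | C) := H(r) − H(pC) satisfies H(K | C) = H(pK) + H(pP) − H(pC). -/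
/-- The Shannon entropy (base 2) of a probability distribution on a finite type, with the
convention `0 · log₂ 0 = 0` (automatic since `Real.logb 2 0 = 0`). -/
noncomputable def shannonEntropy {α : Type*} [Fintype α] (p : α → ℝ) : ℝ :=
  -∑ a, p a * Real.logb 2 (p a)

/-- Key equivocation identity (Eq. (8) of the paper): for a cryptosystem with injective
encryption rules and independently drawn key and plaintext,
`H(K | C) = H(r) − H(pC) = H(pK) + H(pP) − H(pC)`. -/
theorem key_equivocation_identity {K P C : Type*} [Fintype K] [Fintype P] [Fintype C]
    [DecidableEq C]
    (pK : K → ℝ) (hK0 : ∀ k, 0 ≤ pK k) (hK1 : ∑ k, pK k = 1)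
    (pP : P → ℝ) (hP0 : ∀ p, 0 ≤ pP p) (hP1 : ∑ p, pP p = 1)
    (e : K → P → C) (he : ∀ k, Function.Injective (e k))
    (q : K × P → ℝ) (hq : ∀ x, q x = pK x.1 * pP x.2)
    (pC : C → ℝ)
    (hpC : ∀ c, pC c = ∑ x ∈ Finset.univ.filter (fun x : K × P => e x.1 x.2 = c), q x)
    (r : K × C → ℝ)
    (hr : ∀ k c, r (k, c) = ∑ p ∈ Finset.univ.filter (fun p : P => e k p = c), q (k, p)) :
    shannonEntropy r - shannonEntropy pC =
      shannonEntropy pK + shannonEntropy pP - shannonEntropy pC := by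
  have key : shannonEntropy r = shannonEntropy pK + shannonEntropy pP := by
    have hrq : shannonEntropy r = shannonEntropy q := by
      unfold shannonEntropy
      congr 1
      rw [Fintype.sum_prod_type, Fintype.sum_prod_type]
      refine Finset.sum_congr rfl fun k _ => ?_
      have h1 : ∀ c ∈ Finset.univ, c ∉ Finset.univ.image (e k) →
          r (k, c) * Real.logb 2 (r (k, c)) = 0 := by
        intro c _ hc
        have : r (k, c) = 0 := by
          rw [hr]
          apply Finset.sum_eq_zero
          intro p hp
          simp only [Finset.mem_filter] at hp
          exact absurd (Finset.mem_image.mpr ⟨p, Finset.mem_univ p, hp.2⟩) hc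
        simp [this]
      rw [← Finset.sum_subset (Finset.subset_univ (Finset.univ.image (e k))) h1,
        Finset.sum_image (fun a _ b _ h => he k h)]
      refine Finset.sum_congr rfl fun p _ => ?_
      have : r (k, e k p) = q (k, p) := by
        rw [hr]
        rw [show Finset.univ.filter (fun p' : P => e k p' = e k p) = {p} by
          ext x; simp [he k |>.eq_iff]]
        simp
      rw [this]
    rw [hrq]
    unfold shannonEntropy
    rw [Fintype.sum_prod_type]
    have : ∀ k : K, ∑ p : P, q (k, p) * Real.logb 2 (q (k, p)) =
        pK k * Real.logb 2 (pK k) + pK k * ∑ p : P, pP p * Real.logb 2 (pP p) := by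
      intro k
      rw [Finset.mul_sum]
      rw [show pK k * Real.logb 2 (pK k) =
          ∑ p : P, pP p * (pK k * Real.logb 2 (pK k)) by
        rw [← Finset.sum_mul, hP1, one_mul]]
      rw [← Finset.sum_add_distrib]
      refine Finset.sum_congr rfl fun p _ => ?_
      simp only [hq]
      rcases eq_or_ne (pK k) 0 with h | h
      · simp [h]
      rcases eq_or_ne (pP p) 0 with h' | h'
      · simp [h']
      rw [Real.logb_mul h h']
      ring
    rw [Finset.sum_congr rfl (fun k _ => this k), Finset.sum_add_distrib,
      ← Finset.sum_mul, hK1, one_mul]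
    ring
  rw [key]
end

section
/- Let K, P, C be finite types with C nonempty, let pK : K → ℝ and pP : P → ℝ be probability distributions, and let e : K → P → C be an encryption rule such that e(k) : P → C is injective for every k ∈ K. With q, pC, r and the key equivocation H(K | C) = H(r) − H(pC) defined as in the key-equivocation identity, one has H(K | C) ≥ H(pK) + H(pP) − log₂ |C|, where |C| is the cardinality of C. -/
lemma shannonEntropy_eq {α : Type*} [Fintype α] (p : α → ℝ) :
    shannonEntropy p = (∑ a, Real.negMulLog (p a)) / Real.log 2 := by
  unfold shannonEntropy
  rw [Finset.sum_div, ← Finset.sum_neg_distrib]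
  refine Finset.sum_congr rfl fun a _ => ?_
  rw [Real.negMulLog, Real.logb]
  ring

/-- Jensen: natural-log entropy is at most `log card`. -/
lemma sum_negMulLog_le_log_card {α : Type*} [Fintype α] [Nonempty α] (p : α → ℝ)
    (h0 : ∀ a, 0 ≤ p a) (h1 : ∑ a, p a = 1) :
    ∑ a, Real.negMulLog (p a) ≤ Real.log (Fintype.card α) := by
  set n : ℝ := (Fintype.card α : ℝ) with hn
  have hnpos : (0 : ℝ) < n := by
    rw [hn]; exact Nat.cast_pos.mpr Fintype.card_pos
  have jensen := Real.concaveOn_negMulLog.le_map_sum (t := Finset.univ)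
    (w := fun _ : α => n⁻¹) (p := p)
    (fun _ _ => by positivity)
    (by simp [Finset.card_univ, hn, mul_inv_cancel₀ hnpos.ne'])
    (fun a _ => h0 a)
  have hsum : ∑ a, n⁻¹ • p a = n⁻¹ := by
    rw [← Finset.smul_sum, h1, smul_eq_mul, mul_one]
  rw [hsum] at jensen
  have hneg : Real.negMulLog n⁻¹ = n⁻¹ * Real.log n := by
    rw [Real.negMulLog, Real.log_inv]; ring
  have : ∑ a, n⁻¹ • Real.negMulLog (p a) = n⁻¹ * ∑ a, Real.negMulLog (p a) := by
    rw [← Finset.smul_sum]; simp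
  rw [this, hneg] at jensen
  calc ∑ a, Real.negMulLog (p a) = n * (n⁻¹ * ∑ a, Real.negMulLog (p a)) := by
        field_simp
    _ ≤ n * (n⁻¹ * Real.log n) := by
        exact mul_le_mul_of_nonneg_left jensen hnpos.le
    _ = Real.log n := by field_simp

/-- Lower bound on the key equivocation (Eq. (9) of the paper): for a cryptosystem with
injective encryption rules and independently drawn key and plaintext,
`H(K | C) = H(r) − H(pC) ≥ H(pK) + H(pP) − log₂ |C|`. -/
theorem key_equivocation_lower_bound {K P C : Type*} [Fintype K] [Fintype P] [Fintype C]
    [Nonempty C] [DecidableEq C]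
    (pK : K → ℝ) (hK0 : ∀ k, 0 ≤ pK k) (hK1 : ∑ k, pK k = 1)
    (pP : P → ℝ) (hP0 : ∀ p, 0 ≤ pP p) (hP1 : ∑ p, pP p = 1)
    (e : K → P → C) (he : ∀ k, Function.Injective (e k))
    (q : K × P → ℝ) (hq : ∀ x, q x = pK x.1 * pP x.2)
    (pC : C → ℝ)
    (hpC : ∀ c, pC c = ∑ x ∈ Finset.univ.filter (fun x : K × P => e x.1 x.2 = c), q x)
    (r : K × C → ℝ)
    (hr : ∀ k c, r (k, c) = ∑ p ∈ Finset.univ.filter (fun p : P => e k p = c), q (k, p)) :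
    shannonEntropy r - shannonEntropy pC ≥
      shannonEntropy pK + shannonEntropy pP - Real.logb 2 (Fintype.card C) := by
  have hlog2 : (0 : ℝ) < Real.log 2 := Real.log_pos (by norm_num)
  -- r (k, e k p) = q (k, p), and r (k, c) = 0 off the range of e k
  have hr_eq : ∀ k p, r (k, e k p) = q (k, p) := by
    intro k p
    rw [hr]
    have : Finset.univ.filter (fun p' : P => e k p' = e k p) = {p} := by
      ext p'
      simp [Finset.mem_filter, (he k).eq_iff]
    rw [this, Finset.sum_singleton]
  have hr_zero : ∀ k c, c ∉ Finset.univ.image (e k) → r (k, c) = 0 := by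
    intro k c hc
    rw [hr]
    refine Finset.sum_eq_zero fun p hp => ?_
    exfalso
    exact hc (Finset.mem_image.mpr ⟨p, Finset.mem_univ p, (Finset.mem_filter.mp hp).2⟩)
  -- Step 1: ∑ negMulLog r = ∑ negMulLog q
  have step1 : ∑ x : K × C, Real.negMulLog (r x) = ∑ x : K × P, Real.negMulLog (q x) := by
    rw [Fintype.sum_prod_type, Fintype.sum_prod_type]
    refine Finset.sum_congr rfl fun k _ => ?_
    have himg : ∑ c ∈ Finset.univ.image (e k), Real.negMulLog (r (k, c))
        = ∑ p, Real.negMulLog (q (k, p)) := by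
      rw [Finset.sum_image (fun a _ b _ h => he k h)]
      exact Finset.sum_congr rfl fun p _ => by rw [hr_eq]
    rw [← himg]
    symm
    refine Finset.sum_subset (Finset.subset_univ _) fun c _ hc => ?_
    rw [hr_zero k c hc, Real.negMulLog_zero]
  -- Step 2: ∑ negMulLog q = ∑ negMulLog pK + ∑ negMulLog pP
  have step2 : ∑ x : K × P, Real.negMulLog (q x)
      = (∑ k, Real.negMulLog (pK k)) + ∑ p, Real.negMulLog (pP p) := by
    rw [Fintype.sum_prod_type]
    have : ∀ k, ∑ p, Real.negMulLog (q (k, p))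
        = Real.negMulLog (pK k) + pK k * ∑ p, Real.negMulLog (pP p) := by
      intro k
      have : ∀ p, Real.negMulLog (q (k, p))
          = pP p * Real.negMulLog (pK k) + pK k * Real.negMulLog (pP p) := fun p => by
        rw [hq]; exact Real.negMulLog_mul _ _
      rw [Finset.sum_congr rfl fun p _ => this p, Finset.sum_add_distrib,
        ← Finset.sum_mul, hP1, one_mul, ← Finset.mul_sum]
    rw [Finset.sum_congr rfl fun k _ => this k, Finset.sum_add_distrib,
      ← Finset.sum_mul, hK1, one_mul]
  -- pC is a probability distribution
  have hpC0 : ∀ c, 0 ≤ pC c := fun c => by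
    rw [hpC]
    exact Finset.sum_nonneg fun x _ => by rw [hq]; exact mul_nonneg (hK0 _) (hP0 _)
  have hpC1 : ∑ c, pC c = 1 := by
    have := Finset.sum_fiberwise_of_maps_to
      (s := (Finset.univ : Finset (K × P))) (t := (Finset.univ : Finset C))
      (g := fun x : K × P => e x.1 x.2) (fun i _ => Finset.mem_univ _) q
    rw [Finset.sum_congr rfl fun c _ => hpC c, this, Fintype.sum_prod_type]
    simp_rw [hq]
    rw [Finset.sum_congr rfl fun k _ => by rw [← Finset.mul_sum, hP1, mul_one], hK1]
  -- Step 3: entropy of pC bounded by log card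
  have step3 : ∑ c, Real.negMulLog (pC c) ≤ Real.log (Fintype.card C) :=
    sum_negMulLog_le_log_card pC hpC0 hpC1
  -- Combine
  rw [ge_iff_le, shannonEntropy_eq, shannonEntropy_eq, shannonEntropy_eq, shannonEntropy_eq,
    Real.logb, step1, step2, ← add_div, ← sub_div, ← sub_div,
    div_le_div_iff_of_pos_right hlog2]
  linarith [step3]
end

section
/- Let K, P, C be finite types, let pK : K → ℝ and pP : P → ℝ be probability distributions, and let e : K → P → C be an encryption rule such that e(k) : P → C is injective for every k ∈ K. With q, pC, r and the key equivocation H(K | C) = H(r) − H(pC) defined as in the key-equivocation identity, if the plaintext and ciphertext entropies coincide, H(pP) = H(pC), then the key equivocation equals the full key entropy: H(K | C) = H(pK). -/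
/-- Eq. (10) of the paper: if the plaintext and ciphertext entropies coincide (no redundancy
in the plaintext language), then the key equivocation equals the full key entropy:
`H(K | C) = H(r) − H(pC) = H(pK)`. -/
theorem key_equivocation_eq_key_entropy {K P C : Type*} [Fintype K] [Fintype P] [Fintype C]
    [DecidableEq C]
    (pK : K → ℝ) (hK0 : ∀ k, 0 ≤ pK k) (hK1 : ∑ k, pK k = 1)
    (pP : P → ℝ) (hP0 : ∀ p, 0 ≤ pP p) (hP1 : ∑ p, pP p = 1)
    (e : K → P → C) (he : ∀ k, Function.Injective (e k))
    (q : K × P → ℝ) (hq : ∀ x, q x = pK x.1 * pP x.2)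
    (pC : C → ℝ)
    (hpC : ∀ c, pC c = ∑ x ∈ Finset.univ.filter (fun x : K × P => e x.1 x.2 = c), q x)
    (r : K × C → ℝ)
    (hr : ∀ k c, r (k, c) = ∑ p ∈ Finset.univ.filter (fun p : P => e k p = c), q (k, p))
    (hPC : shannonEntropy pP = shannonEntropy pC) :
    shannonEntropy r - shannonEntropy pC = shannonEntropy pK := by
  classical
  set g : ℝ → ℝ := fun x => x * Real.logb 2 x with hg
  have hg0 : g 0 = 0 := by simp [hg]
  -- r (k, e k p) = q (k, p)
  have hre : ∀ k p, r (k, e k p) = q (k, p) := by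
    intro k p
    have hfil : Finset.univ.filter (fun p' : P => e k p' = e k p) = {p} := by
      ext p'
      simp [(he k).eq_iff]
    rw [hr, hfil, Finset.sum_singleton]
  -- the joint entropy sums agree
  have hsum : ∑ x : K × C, g (r x) = ∑ x : K × P, g (q x) := by
    rw [Fintype.sum_prod_type, Fintype.sum_prod_type]
    refine Finset.sum_congr rfl fun k _ => ?_
    have h1 : ∑ c, g (r (k, c)) = ∑ c ∈ Finset.univ.image (e k), g (r (k, c)) := by
      symm
      apply Finset.sum_subset (Finset.subset_univ _)
      intro c _ hc
      have hr0 : r (k, c) = 0 := by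
        rw [hr]
        have : Finset.univ.filter (fun p' : P => e k p' = c) = ∅ := by
          ext p'
          simp only [Finset.mem_filter, Finset.mem_univ, true_and, Finset.notMem_empty,
            iff_false]
          intro h
          exact hc (Finset.mem_image.mpr ⟨p', Finset.mem_univ _, h⟩)
        rw [this, Finset.sum_empty]
      rw [hr0, hg0]
    rw [h1, Finset.sum_image (fun p _ p' _ h => he k h)]
    exact Finset.sum_congr rfl fun p _ => by rw [hre]
  -- split the joint entropy of q
  have key : ∀ (x y : ℝ), x * y * Real.logb 2 (x * y)
      = (x * Real.logb 2 x) * y + x * (y * Real.logb 2 y) := by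
    intro x y
    rcases eq_or_ne x 0 with h | h
    · simp [h]
    rcases eq_or_ne y 0 with h' | h'
    · simp [h']
    rw [Real.logb_mul h h']
    ring
  have hq' : ∑ x : K × P, g (q x) = (∑ k, g (pK k)) + (∑ p, g (pP p)) := by
    have step : ∑ x : K × P, g (q x)
        = ∑ k, ∑ p, ((pK k * Real.logb 2 (pK k)) * pP p
            + pK k * (pP p * Real.logb 2 (pP p))) := by
      rw [Fintype.sum_prod_type]
      refine Finset.sum_congr rfl fun k _ => Finset.sum_congr rfl fun p _ => ?_
      simp only [hg, hq]
      exact key _ _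
    rw [step]
    have : ∀ k : K, ∑ p, ((pK k * Real.logb 2 (pK k)) * pP p
        + pK k * (pP p * Real.logb 2 (pP p)))
        = g (pK k) + pK k * (∑ p, g (pP p)) := by
      intro k
      rw [Finset.sum_add_distrib, ← Finset.mul_sum, ← Finset.mul_sum, hP1, mul_one]
    simp only [this]
    rw [Finset.sum_add_distrib, ← Finset.sum_mul, hK1, one_mul]
  have hHr : shannonEntropy r = shannonEntropy pK + shannonEntropy pP := by
    simp only [shannonEntropy]
    have : ∑ x : K × C, r x * Real.logb 2 (r x) = ∑ x : K × C, g (r x) := rfl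
    rw [this, hsum, hq']
    simp only [hg]
    ring
  rw [hHr, hPC]
  ring
end
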